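/- Let $S$ be a commutative ring, let $X, Y \in S$, let $r, s$ be natural numbers (regarded as elements of $S$), and let $i \ge 2$ be an integer. Then $\Big(r\sum_{k=1}^{i-1}\binom{i-1}{k}r^{i-1-k}s^k\Big)X^i + \Big(s\sum_{k=0}^{i-2}\binom{i-1}{k}r^{i-1-k}s^k\Big)Y^i - \sum_{k=1}^{i-1}\binom{i}{k}(rX)^{i-k}(sY)^k = (X-Y)^2 \cdot \sum_{l=0}^{i-2}\Big(\sum_{k=1}^{l}(i-l-1)\binom{i-1}{k-1}r^{i-k}s^k + (l+1)\sum_{k=l+1}^{i-1}\binom{i-1}{k}r^{i-k}s^k\Big)X^{i-l-2}Y^l$. (Hence whenever $(X-Y)^2 = 0$, the left-hand side vanishes.) -/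

import Mathlib

open Finset

def thmCC (r s i l : ℕ) : ℕ :=
  (i - l - 1) * ∑ j ∈ range l, (i-1).choose j * r ^ (i-1-j) * s ^ (j+1)
  + (l + 1) * ∑ j ∈ range (i-1-l), (i-1).choose (l+1+j) * r ^ (i-l-1-j) * s ^ (l+1+j)

lemma thmCC_eq (r s l n : ℕ) : thmCC r s (l+n+2) l =
    (n+1) * ∑ j ∈ range l, (l+n+1).choose j * r^(l+n+1-j) * s^(j+1)
    + (l+1) * ∑ j ∈ range (n+1), (l+n+1).choose (l+1+j) * r^(n+1-j) * s^(l+1+j) := by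
  simp only [thmCC, show l+n+2-l-1 = n+1 from by omega, show l+n+2-1 = l+n+1 from by omega,
    show l+n+1-l = n+1 from by omega]

lemma thmCC_eq' (r s l n : ℕ) : thmCC r s (l+n+2) (l+1) =
    n * ∑ j ∈ range (l+1), (l+n+1).choose j * r^(l+n+1-j) * s^(j+1)
    + (l+2) * ∑ j ∈ range n, (l+n+1).choose (l+2+j) * r^(n-j) * s^(l+2+j) := by
  simp only [thmCC, show l+n+2-(l+1)-1 = n from by omega, show l+n+2-1 = l+n+1 from by omega,
    show l+n+1-(l+1) = n from by omega, show ∀ j:ℕ, l+1+1+j = l+2+j from fun j => by omega]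

lemma thmCC_top (r s i : ℕ) : thmCC r s i (i-1) = 0 := by
  simp [thmCC, show i-(i-1)-1 = 0 from by omega, show i-1-(i-1) = 0 from by omega]

lemma myPascalSum (f : ℕ → ℕ) (n L : ℕ) :
    ∑ j ∈ range (L+1), (n+1).choose j * f j
      = ∑ j ∈ range (L+1), n.choose j * f j + ∑ j ∈ range L, n.choose j * f (j+1) := by
  induction L with
  | zero => simp
  | succ L ih =>
      rw [sum_range_succ, ih, sum_range_succ (fun j => n.choose j * f j) (L+1),
        sum_range_succ (fun j => n.choose j * f (j+1)) L, Nat.choose_succ_succ]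
      ring

lemma thmCC_rec (r s l m : ℕ) (h : l ≤ m) :
    thmCC r s (m+3) (l+1)
      = r * thmCC r s (m+2) (l+1) + s * thmCC r s (m+2) l + r*s*(r+s)^(m+1) := by
  obtain ⟨n, rfl⟩ : ∃ n, m = l + n := ⟨m - l, by omega⟩
  have H1 : thmCC r s (l+n+3) (l+1) =
      (n+1) * ∑ j ∈ range (l+1), (l+n+2).choose j * (r^(l+n+2-j) * s^(j+1))
      + (l+2) * ∑ j ∈ range (n+1), (l+n+2).choose (l+2+j) * (r^(n+1-j) * s^(l+2+j)) := by
    have H := thmCC_eq' r s l (n+1)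
    simpa [show l+(n+1)+2 = l+n+3 from by omega, show l+(n+1)+1 = l+n+2 from by omega,
      mul_assoc] using H
  have hA : ∑ j ∈ range (l+1), (l+n+2).choose j * (r^(l+n+2-j) * s^(j+1))
      = r * ∑ j ∈ range (l+1), (l+n+1).choose j * (r^(l+n+1-j) * s^(j+1))
      + s * ∑ j ∈ range l, (l+n+1).choose j * (r^(l+n+1-j) * s^(j+1)) := by
    rw [myPascalSum (fun j => r^(l+n+2-j) * s^(j+1)) (l+n+1) l, Finset.mul_sum, Finset.mul_sum]
    congr 1
    · refine sum_congr rfl fun j hj => ?_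
      have hj' : j ≤ l := by have := mem_range.mp hj; omega
      rw [show l+n+2-j = (l+n+1-j)+1 from by omega, pow_succ]; ring
    · refine sum_congr rfl fun j hj => ?_
      rw [show l+n+2-(j+1) = l+n+1-j from by omega]; ring
  have hB : ∑ j ∈ range (n+1), (l+n+2).choose (l+2+j) * (r^(n+1-j) * s^(l+2+j))
      = s * ∑ j ∈ range (n+1), (l+n+1).choose (l+1+j) * (r^(n+1-j) * s^(l+1+j))
      + r * ∑ j ∈ range n, (l+n+1).choose (l+2+j) * (r^(n-j) * s^(l+2+j)) := by
    have step1 : ∀ j ∈ range (n+1),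
        (l+n+2).choose (l+2+j) * (r^(n+1-j) * s^(l+2+j))
        = (l+n+1).choose (l+1+j) * (r^(n+1-j) * s^(l+2+j))
          + (l+n+1).choose (l+2+j) * (r^(n+1-j) * s^(l+2+j)) := by
      intro j _
      rw [show l+n+2 = (l+n+1)+1 from by omega, show l+2+j = (l+1+j)+1 from by omega,
        Nat.choose_succ_succ, add_mul]
    rw [sum_congr rfl step1, sum_add_distrib]
    congr 1
    · rw [Finset.mul_sum]
      refine sum_congr rfl fun j hj => ?_
      rw [show l+2+j = (l+1+j)+1 from by omega, pow_succ]; ring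
    · rw [sum_range_succ, Nat.choose_eq_zero_of_lt (by omega), zero_mul, add_zero,
        Finset.mul_sum]
      refine sum_congr rfl fun j hj => ?_
      have hj' : j < n := mem_range.mp hj
      rw [show n+1-j = (n-j)+1 from by omega, pow_succ]; ring
  have hT : r * (s * (r+s)^(l+n+1))
      = r * ∑ j ∈ range (l+1), (l+n+1).choose j * (r^(l+n+1-j) * s^(j+1))
      + s * ∑ j ∈ range (n+1), (l+n+1).choose (l+1+j) * (r^(n+1-j) * s^(l+1+j)) := by
    have hap : (r+s)^(l+n+1) = ∑ j ∈ range (l+n+2), s^j * r^(l+n+1-j) * (l+n+1).choose j := by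
      rw [add_comm r s]; exact add_pow s r (l+n+1)
    rw [hap, Finset.mul_sum, Finset.mul_sum, show l+n+2 = (l+1)+(n+1) from by omega,
      Finset.sum_range_add, Finset.mul_sum, Finset.mul_sum]
    congr 1
    · refine sum_congr rfl fun j hj => ?_
      have hj' : j ≤ l := by have := mem_range.mp hj; omega
      rw [show l+n+1-j = ((l+n-j)+1) from by omega]
      ring
    · refine sum_congr rfl fun j hj => ?_
      have hj' : j ≤ n := by have := mem_range.mp hj; omega
      rw [show l+n+1-(l+1+j) = n-j from by omega, show n+1-j = (n-j)+1 from by omega, pow_succ]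
      ring
  rw [H1, thmCC_eq' r s l n, thmCC_eq r s l n]
  simp only [mul_assoc]
  rw [hA, hB, hT]
  ring

lemma thmCC_rec0 (r s m : ℕ) :
    thmCC r s (m+3) 0 = r * thmCC r s (m+2) 0 + r*s*(r+s)^(m+1) := by
  have H1 : thmCC r s (m+3) 0
      = ∑ j ∈ range (m+2), (m+2).choose (1+j) * (r^(m+2-j) * s^(1+j)) := by
    have H := thmCC_eq r s 0 (m+1)
    simpa [show 0+(m+1)+2 = m+3 from by omega, show 0+(m+1)+1 = m+2 from by omega,
      mul_assoc] using H
  have H2 : thmCC r s (m+2) 0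
      = ∑ j ∈ range (m+1), (m+1).choose (1+j) * (r^(m+1-j) * s^(1+j)) := by
    have H := thmCC_eq r s 0 m
    simpa [show 0+m+2 = m+2 from by omega, show 0+m+1 = m+1 from by omega,
      mul_assoc] using H
  have step1 : ∀ j ∈ range (m+2),
      (m+2).choose (1+j) * (r^(m+2-j) * s^(1+j))
      = (m+1).choose j * (r^(m+2-j) * s^(1+j))
        + (m+1).choose (1+j) * (r^(m+2-j) * s^(1+j)) := by
    intro j _
    rw [show m+2 = (m+1)+1 from by omega, show 1+j = j+1 from by omega,
      Nat.choose_succ_succ, add_mul]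
  have hap : r * (s * (r+s)^(m+1))
      = ∑ j ∈ range (m+2), (m+1).choose j * (r^(m+2-j) * s^(1+j)) := by
    have h : (r+s)^(m+1) = ∑ j ∈ range (m+2), s^j * r^(m+1-j) * (m+1).choose j := by
      rw [add_comm r s]; exact add_pow s r (m+1)
    rw [h, Finset.mul_sum, Finset.mul_sum]
    refine sum_congr rfl fun j hj => ?_
    have hj' : j ≤ m+1 := by have := mem_range.mp hj; omega
    rw [show m+2-j = (m+1-j)+1 from by omega, pow_succ]
    ring
  rw [H1, H2, sum_congr rfl step1, sum_add_distrib, ← hap,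
    sum_range_succ (fun j => (m+1).choose (1+j) * (r^(m+2-j) * s^(1+j))) (m+1),
    Nat.choose_eq_zero_of_lt (by omega), zero_mul, add_zero, Finset.mul_sum]
  have : ∀ j ∈ range (m+1),
      (m+1).choose (1+j) * (r^(m+2-j) * s^(1+j))
      = r * ((m+1).choose (1+j) * (r^(m+1-j) * s^(1+j))) := by
    intro j hj
    have hj' : j ≤ m := by have := mem_range.mp hj; omega
    rw [show m+2-j = (m+1-j)+1 from by omega, pow_succ]; ring
  rw [sum_congr rfl this]
  ring

lemma thmCC_two (r s : ℕ) : thmCC r s 2 0 = r * s := by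
  simp [thmCC]

lemma thmMain {S : Type*} [CommRing S] (X Y : S) (r s : ℕ) (m : ℕ) :
    (r:S) * ((r:S)+(s:S))^(m+1) * X^(m+2) + (s:S) * ((r:S)+(s:S))^(m+1) * Y^(m+2)
      - ((r:S)*X + (s:S)*Y)^(m+2)
    = (X - Y)^2 * ∑ l ∈ range (m+1), (thmCC r s (m+2) l : S) * X^(m-l) * Y^l := by
  induction m with
  | zero =>
      have h0 : thmCC r s (0+2) 0 = r * s := thmCC_two r s
      rw [sum_range_one, h0]
      push_cast
      ring
  | succ m ih =>
      simp only [show m+1+1 = m+2 from by omega, show m+1+2 = m+3 from by omega]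
      -- the geometric-sum identity
      have hrefl : ∑ j ∈ range (m+2), X^j * Y^(m+2-1-j)
          = ∑ l ∈ range (m+2), X^(m+1-l) * Y^l := by
        rw [← sum_range_reflect (fun l => X^(m+1-l) * Y^l) (m+2)]
        refine sum_congr rfl fun j hj => ?_
        have hj' : j ≤ m+1 := by have := mem_range.mp hj; omega
        rw [show m+2-1-j = m+1-j from by omega, show m+1-(m+1-j) = j from by omega]
      have geo : X^(m+2) - Y^(m+2)
          = (X - Y) * ∑ l ∈ range (m+2), X^(m+1-l) * Y^l := by
        rw [← geom_sum₂_mul X Y (m+2), hrefl, mul_comm]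
      have hrec : (r:S) * ((r:S)+(s:S))^(m+2) * X^(m+3) + (s:S) * ((r:S)+(s:S))^(m+2) * Y^(m+3)
          - ((r:S)*X + (s:S)*Y)^(m+3)
          = ((r:S)*X + (s:S)*Y) *
              ((r:S) * ((r:S)+(s:S))^(m+1) * X^(m+2) + (s:S) * ((r:S)+(s:S))^(m+1) * Y^(m+2)
                - ((r:S)*X + (s:S)*Y)^(m+2))
            + (r:S)*(s:S)*((r:S)+(s:S))^(m+1) * (X - Y) * (X^(m+2) - Y^(m+2)) := by
        ring
      rw [hrec, ih, geo]
      have hsum : ∑ l ∈ range (m+2), (thmCC r s (m+3) l : S) * X^(m+1-l) * Y^l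
          = ((r:S)*X + (s:S)*Y) * ∑ l ∈ range (m+1), (thmCC r s (m+2) l : S) * X^(m-l) * Y^l
            + (r:S)*(s:S)*((r:S)+(s:S))^(m+1) * ∑ l ∈ range (m+2), X^(m+1-l) * Y^l := by
        -- expand the Z-multiplication
        have hz : ((r:S)*X + (s:S)*Y) * ∑ l ∈ range (m+1), (thmCC r s (m+2) l : S) * X^(m-l) * Y^l
            = ∑ l ∈ range (m+1), (r:S) * ((thmCC r s (m+2) l : S) * X^(m+1-l) * Y^l)
              + ∑ l ∈ range (m+1), (s:S) * ((thmCC r s (m+2) l : S) * X^(m-l) * Y^(l+1)) := by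
          rw [add_mul, Finset.mul_sum, Finset.mul_sum]
          congr 1
          · refine sum_congr rfl fun l hl => ?_
            have hl' : l ≤ m := by have := mem_range.mp hl; omega
            rw [show m+1-l = (m-l)+1 from by omega, pow_succ]; ring
          · refine sum_congr rfl fun l hl => ?_
            ring
        have h1 : ∑ l ∈ range (m+1), (r:S) * ((thmCC r s (m+2) l : S) * X^(m+1-l) * Y^l)
            = ∑ l ∈ range (m+1), (r:S) * ((thmCC r s (m+2) (l+1) : S) * X^(m-l) * Y^(l+1))
              + (r:S) * (thmCC r s (m+2) 0 : S) * X^(m+1) := by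
          rw [sum_range_succ' (fun l => (r:S) * ((thmCC r s (m+2) l : S) * X^(m+1-l) * Y^l)) m]
          congr 1
          · rw [sum_range_succ
              (fun l => (r:S) * ((thmCC r s (m+2) (l+1) : S) * X^(m-l) * Y^(l+1))) m]
            have htop : thmCC r s (m+2) (m+1) = 0 := by
              have := thmCC_top r s (m+2); simpa using this
            rw [htop]
            simp
          · simp [mul_assoc]
        have h3 : (r:S)*(s:S)*((r:S)+(s:S))^(m+1) * ∑ l ∈ range (m+2), X^(m+1-l) * Y^l
            = ∑ l ∈ range (m+1), (r:S)*(s:S)*((r:S)+(s:S))^(m+1) * (X^(m-l) * Y^(l+1))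
              + (r:S)*(s:S)*((r:S)+(s:S))^(m+1) * X^(m+1) := by
          rw [Finset.mul_sum,
            sum_range_succ' (fun l => (r:S)*(s:S)*((r:S)+(s:S))^(m+1) * (X^(m+1-l) * Y^l)) (m+1)]
          congr 1
          · refine sum_congr rfl fun l hl => ?_
            have hl' : l ≤ m := by have := mem_range.mp hl; omega
            rw [show m+1-(l+1) = m-l from by omega]
          · simp
        have h0 : ∑ l ∈ range (m+2), (thmCC r s (m+3) l : S) * X^(m+1-l) * Y^l
            = ∑ l ∈ range (m+1), ((r:S) * ((thmCC r s (m+2) (l+1) : S) * X^(m-l) * Y^(l+1))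
                + (s:S) * ((thmCC r s (m+2) l : S) * X^(m-l) * Y^(l+1))
                + (r:S)*(s:S)*((r:S)+(s:S))^(m+1) * (X^(m-l) * Y^(l+1)))
              + ((r:S) * (thmCC r s (m+2) 0 : S) * X^(m+1)
                + (r:S)*(s:S)*((r:S)+(s:S))^(m+1) * X^(m+1)) := by
          rw [sum_range_succ' (fun l => (thmCC r s (m+3) l : S) * X^(m+1-l) * Y^l) (m+1)]
          congr 1
          · refine sum_congr rfl fun l hl => ?_
            have hl' : l ≤ m := by have := mem_range.mp hl; omega
            have hc := congrArg (fun n : ℕ => (n : S)) (thmCC_rec r s l m hl')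
            push_cast at hc
            rw [show m+1-(l+1) = m-l from by omega, hc]; ring
          · have hc0 := congrArg (fun n : ℕ => (n : S)) (thmCC_rec0 r s m)
            push_cast at hc0
            rw [hc0]
            simp
            ring
        rw [hz, h0, sum_add_distrib, sum_add_distrib, h1, h3]
        ring
      rw [hsum]
      ring

lemma mySumIccOne {M : Type*} [AddCommMonoid M] (f : ℕ → M) (n : ℕ) :
    ∑ k ∈ Icc 1 n, f k = ∑ j ∈ range n, f (j+1) := by
  induction n with
  | zero => simp
  | succ n ih => rw [Finset.sum_Icc_succ_top (by omega), ih, sum_range_succ]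

lemma mySumIccShift {M : Type*} [AddCommMonoid M] (f : ℕ → M) (a n : ℕ) :
    ∑ k ∈ Icc a (a+n), f k = ∑ j ∈ range (n+1), f (a+j) := by
  induction n with
  | zero => simp
  | succ n ih =>
      rw [show a+(n+1) = (a+n)+1 from by omega, Finset.sum_Icc_succ_top (by omega), ih,
        sum_range_succ (fun j => f (a+j)) (n+1), show a+(n+1) = (a+n)+1 from by omega]

/-- The factorization identity behind equation (ci) in the proof of Theorem 4.1:
the degree-`i` Chern character equation factors through `(X-Y)²`. -/
theorem stmt14 {S : Type*} [CommRing S] (X Y : S) (r s : ℕ) (i : ℕ) (hi : 2 ≤ i) :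
    ((r : S) * ∑ k ∈ Finset.Icc 1 (i - 1),
        ((i - 1).choose k : S) * (r : S) ^ (i - 1 - k) * (s : S) ^ k) * X ^ i
      + ((s : S) * ∑ k ∈ Finset.range (i - 1),
        ((i - 1).choose k : S) * (r : S) ^ (i - 1 - k) * (s : S) ^ k) * Y ^ i
      - ∑ k ∈ Finset.Icc 1 (i - 1),
        (i.choose k : S) * ((r : S) * X) ^ (i - k) * ((s : S) * Y) ^ k
    = (X - Y) ^ 2 *
      ∑ l ∈ Finset.range (i - 1),
        ((∑ k ∈ Finset.Icc 1 l,
            ((i - l - 1 : ℕ) : S) * ((i - 1).choose (k - 1) : S) * (r : S) ^ (i - k) * (s : S) ^ k)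
          + ((l + 1 : ℕ) : S) * ∑ k ∈ Finset.Icc (l + 1) (i - 1),
            ((i - 1).choose k : S) * (r : S) ^ (i - k) * (s : S) ^ k)
        * X ^ (i - l - 2) * Y ^ l := by
  obtain ⟨m, rfl⟩ : ∃ m, i = m + 2 := ⟨i - 2, by omega⟩
  simp only [show m+2-1 = m+1 from by omega]
  -- binomial expansion of (r+s)^(m+1) over S
  have hap : ((r:S)+(s:S))^(m+1)
      = ∑ j ∈ range (m+2), (s:S)^j * (r:S)^(m+1-j) * ((m+1).choose j : S) := by
    rw [add_comm]; exact add_pow (s:S) (r:S) (m+1)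
  have hA : ∑ k ∈ Finset.Icc 1 (m+1),
      ((m+1).choose k : S) * (r : S) ^ (m+1-k) * (s : S) ^ k
      = ((r:S)+(s:S))^(m+1) - (r:S)^(m+1) := by
    rw [mySumIccOne (fun k => ((m+1).choose k : S) * (r : S) ^ (m+1-k) * (s : S) ^ k) (m+1),
      hap, sum_range_succ' (fun j => (s:S)^j * (r:S)^(m+1-j) * ((m+1).choose j : S)) (m+1)]
    simp only [pow_zero, Nat.choose_zero_right, Nat.cast_one, one_mul, mul_one, Nat.sub_zero]
    rw [add_sub_cancel_right]
    exact sum_congr rfl fun j hj => by ring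
  have hB : ∑ k ∈ Finset.range (m+1),
      ((m+1).choose k : S) * (r : S) ^ (m+1-k) * (s : S) ^ k
      = ((r:S)+(s:S))^(m+1) - (s:S)^(m+1) := by
    rw [hap, sum_range_succ (fun j => (s:S)^j * (r:S)^(m+1-j) * ((m+1).choose j : S)) (m+1)]
    simp only [Nat.choose_self, Nat.cast_one, mul_one, Nat.sub_self, pow_zero]
    rw [add_sub_cancel_right]
    exact sum_congr rfl fun j hj => by ring
  have hap2 : ((r:S)*X+(s:S)*Y)^(m+2)
      = ∑ j ∈ range (m+3), ((s:S)*Y)^j * ((r:S)*X)^(m+2-j) * ((m+2).choose j : S) := by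
    rw [add_comm]; exact add_pow ((s:S)*Y) ((r:S)*X) (m+2)
  have hC : ∑ k ∈ Finset.Icc 1 (m+1),
      ((m+2).choose k : S) * ((r : S) * X) ^ (m+2-k) * ((s : S) * Y) ^ k
      = ((r:S)*X+(s:S)*Y)^(m+2) - ((r:S)*X)^(m+2) - ((s:S)*Y)^(m+2) := by
    rw [mySumIccOne
      (fun k => ((m+2).choose k : S) * ((r : S) * X) ^ (m+2-k) * ((s : S) * Y) ^ k) (m+1),
      hap2, sum_range_succ (fun j => ((s:S)*Y)^j * ((r:S)*X)^(m+2-j) * ((m+2).choose j : S)) (m+2),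
      sum_range_succ' (fun j => ((s:S)*Y)^j * ((r:S)*X)^(m+2-j) * ((m+2).choose j : S)) (m+1)]
    simp only [pow_zero, Nat.choose_zero_right, Nat.cast_one, one_mul, mul_one, Nat.sub_zero,
      Nat.choose_self, Nat.sub_self]
    rw [show ∀ (a b c : S), a + b + c - b - c = a from fun a b c => by ring]
    exact sum_congr rfl fun j hj => by ring
  rw [hA, hB, hC]
  have hmain := thmMain X Y r s m
  have hG : ∑ l ∈ Finset.range (m+1),
      ((∑ k ∈ Finset.Icc 1 l,
          ((m+2-l-1 : ℕ) : S) * ((m+1).choose (k-1) : S) * (r:S)^(m+2-k) * (s:S)^k)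
        + ((l+1 : ℕ) : S) * ∑ k ∈ Finset.Icc (l+1) (m+1),
          ((m+1).choose k : S) * (r:S)^(m+2-k) * (s:S)^k)
      * X ^ (m+2-l-2) * Y ^ l
      = ∑ l ∈ range (m+1), (thmCC r s (m+2) l : S) * X^(m-l) * Y^l := by
    refine sum_congr rfl fun l hl => ?_
    have hl' : l ≤ m := by have := mem_range.mp hl; omega
    rw [show m+2-l-2 = m-l from by omega]
    congr 1
    have e2 : ∑ k ∈ Finset.Icc (l+1) (m+1), ((m+1).choose k : S) * (r:S)^(m+2-k) * (s:S)^k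
        = ∑ j ∈ range (m-l+1),
            ((m+1).choose (l+1+j) : S) * (r:S)^(m+2-(l+1+j)) * (s:S)^(l+1+j) := by
      have h := mySumIccShift
        (fun k => ((m+1).choose k : S) * (r:S)^(m+2-k) * (s:S)^k) (l+1) (m-l)
      rw [show (l+1)+(m-l) = m+1 from by omega] at h
      exact h
    rw [mySumIccOne
      (fun k => ((m+2-l-1 : ℕ) : S) * ((m+1).choose (k-1) : S) * (r:S)^(m+2-k) * (s:S)^k) l, e2]
    simp only [thmCC]
    push_cast
    try simp only [show m+2-1 = m+1 from by omega]
    congr 2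
    · rw [Finset.mul_sum]
      exact Finset.sum_congr rfl fun j _ => by ring
    · rw [show m+1-l = m-l+1 from by omega]
      congr 1
      exact Finset.sum_congr rfl fun j _ => by
        rw [show m+2-(l+1+j) = m+2-l-1-j from by omega]
  rw [hG, ← hmain]
  ring
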